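/- arXiv:2102.03451 — 4 statements merged into one kernel-verified Lean document; each statement's English description precedes it below -/
import Mathlib

section
/- If (a,b,b+g) is a primitive Pythagorean triple with g a positive integer, then either g=m² for some odd integer m, or g=2m² for some positive integer m. -/
theorem stmt_1 (a b g : ℕ) (ha : 0 < a) (hb : 0 < b) (hg : 0 < g)
    (hpyth : a ^ 2 + b ^ 2 = (b + g) ^ 2)
    (hprim : Nat.gcd (Nat.gcd a b) (b + g) = 1) :
    (∃ m : ℕ, Odd m ∧ g = m ^ 2) ∨ (∃ m : ℕ, 0 < m ∧ g = 2 * m ^ 2) := by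
  have key : a ^ 2 = g * (g + 2 * b) := by
    have e : (b + g) ^ 2 = b ^ 2 + g * (g + 2 * b) := by ring
    omega
  -- coprimality of g and b
  have hgb : Nat.Coprime g b := by
    by_contra h
    obtain ⟨p, hp, hpd⟩ := Nat.exists_prime_and_dvd h
    have hpg : p ∣ g := hpd.trans (Nat.gcd_dvd_left _ _)
    have hpb : p ∣ b := hpd.trans (Nat.gcd_dvd_right _ _)
    have hpa : p ∣ a := hp.dvd_of_dvd_pow (n := 2) (key ▸ hpg.mul_right _)
    have : p ∣ 1 := hprim ▸ Nat.dvd_gcd (Nat.dvd_gcd hpa hpb) (hpb.add hpg)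
    exact hp.one_lt.ne' (Nat.eq_one_of_dvd_one this)
  rcases Nat.even_or_odd g with hge | hgo
  · -- g even: g = 2h, a even, (a/2)^2 = h * (h + b)
    right
    obtain ⟨h, rfl⟩ := hge
    have hae : 2 ∣ a := by
      have : 2 ∣ a ^ 2 := ⟨h * (h + h + 2 * b), by rw [key]; ring⟩
      exact (Nat.Prime.dvd_of_dvd_pow Nat.prime_two this)
    obtain ⟨k, rfl⟩ := hae
    have key2 : k ^ 2 = h * (h + b) := by
      have e2 : (2 * k) ^ 2 = 4 * k ^ 2 := by ring
      have e3 : (h + h) * (h + h + 2 * b) = 4 * (h * (h + b)) := by ring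
      omega
    have hhb : Nat.Coprime h (h + b) := by
      have h1 : Nat.Coprime h b := Nat.Coprime.coprime_dvd_left ⟨2, by ring⟩ hgb
      simpa [Nat.Coprime, Nat.gcd_add_self_left, Nat.add_comm] using h1
    obtain ⟨m, hm⟩ := exists_eq_pow_of_mul_eq_pow (k := 2)
      (Nat.isUnit_iff.mpr hhb) key2.symm
    refine ⟨m, Nat.pos_of_ne_zero ?_, by omega⟩
    rintro rfl; simp at hm; omega
  · -- g odd: g coprime to g + 2b, so g is a square
    left
    have hcop : Nat.Coprime g (g + 2 * b) := by
      have h2 : Nat.Coprime g 2 := by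
        refine Nat.Coprime.symm ((Nat.Prime.coprime_iff_not_dvd Nat.prime_two).mpr ?_)
        rw [Nat.odd_iff] at hgo; omega
      have : Nat.Coprime g (2 * b) := h2.mul_right hgb
      simpa [Nat.Coprime, Nat.gcd_add_self_left] using this
    obtain ⟨m, hm⟩ := exists_eq_pow_of_mul_eq_pow (k := 2)
      (Nat.isUnit_iff.mpr hcop) key.symm
    refine ⟨m, ?_, hm⟩
    rcases Nat.even_or_odd m with ⟨t, rfl⟩ | ho
    · exfalso
      obtain ⟨j, hj⟩ := hgo
      have e4 : (t + t) ^ 2 = 4 * (t * t) := by ring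
      omega
    · exact ho
end

section
/- If (a,a+f,c) is a primitive Pythagorean triple and p is a prime dividing f, then p ≡ 1 (mod 8) or p ≡ -1 (mod 8). -/
private lemma sq_mod_four (n : ℕ) : n ^ 2 % 4 = 0 ∨ n ^ 2 % 4 = 1 := by
  rcases Nat.even_or_odd n with ⟨k, hk⟩ | ⟨k, hk⟩ <;> subst hk <;> ring_nf <;> omega

theorem stmt_5 (a f c : ℕ) (ha : 0 < a) (hf : 0 < f) (hc : 0 < c)
    (hpyth : a ^ 2 + (a + f) ^ 2 = c ^ 2)
    (hprim : Nat.gcd (Nat.gcd a (a + f)) c = 1)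
    (p : ℕ) (hp : p.Prime) (hpf : p ∣ f) :
    p % 8 = 1 ∨ p % 8 = 7 := by
  have hdvd1 : ¬ (p ∣ a ∧ p ∣ (a + f) ∧ p ∣ c) := by
    rintro ⟨h1, h2, h3⟩
    have : p ∣ 1 := hprim ▸ Nat.dvd_gcd (Nat.dvd_gcd h1 h2) h3
    exact hp.one_lt.ne' (Nat.dvd_one.mp this)
  have hp2 : p ≠ 2 := by
    rintro rfl
    have hodd : ¬ (2 ∣ a) := by
      intro h2a
      have h2b : 2 ∣ a + f := Nat.dvd_add h2a hpf
      have h2c : 2 ∣ c := by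
        have : 2 ∣ c ^ 2 := by
          rw [← hpyth]
          exact Nat.dvd_add (Dvd.dvd.pow h2a two_ne_zero) (Dvd.dvd.pow h2b two_ne_zero)
        exact Nat.Prime.dvd_of_dvd_pow Nat.prime_two this
      exact hdvd1 ⟨h2a, h2b, h2c⟩
    have ha1 : a % 2 = 1 := Nat.odd_iff.mp (Nat.odd_iff.mpr (by omega))
    obtain ⟨k, hk⟩ := Nat.odd_iff.mpr ha1
    obtain ⟨m, hm⟩ := hpf
    have h1 : a ^ 2 % 4 = 1 := by subst hk; ring_nf; omega
    have h2 : (a + f) ^ 2 % 4 = 1 := by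
      have : Odd (a + f) := by
        rw [hm, hk]; exact ⟨k + m, by ring⟩
      obtain ⟨j, hj⟩ := this
      rw [hj]; ring_nf; omega
    rcases sq_mod_four c with h3 | h3 <;> omega
  haveI : Fact p.Prime := ⟨hp⟩
  have hfz : (f : ZMod p) = 0 := (ZMod.natCast_eq_zero_iff f p).mpr hpf
  have haz : (a : ZMod p) ≠ 0 := by
    intro h0
    have hpa : p ∣ a := (ZMod.natCast_eq_zero_iff a p).mp h0
    have hpb : p ∣ a + f := Nat.dvd_add hpa hpf
    have hpc : p ∣ c := by
      apply hp.dvd_of_dvd_pow (n := 2)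
      rw [← hpyth]
      exact Nat.dvd_add (Dvd.dvd.pow hpa two_ne_zero) (Dvd.dvd.pow hpb two_ne_zero)
    exact hdvd1 ⟨hpa, hpb, hpc⟩
  have hcast : (a : ZMod p) ^ 2 + ((a : ZMod p) + f) ^ 2 = (c : ZMod p) ^ 2 := by
    exact_mod_cast congrArg (Nat.cast : ℕ → ZMod p) hpyth
  rw [hfz, add_zero] at hcast
  have h2sq : IsSquare (2 : ZMod p) := by
    refine ⟨(c : ZMod p) * (a : ZMod p)⁻¹, ?_⟩
    field_simp
    linear_combination hcast
  exact (ZMod.exists_sq_eq_two_iff hp2).mp h2sq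
end

section
/- Let f be a prime with f ≡ ±1 (mod 8), and let 𝔲∈ℤ[√2] be a generator of a prime ideal above f (so N(𝔲)=±f). If X+Y√2 = ±(1+√2)(3+2√2)^m·𝔲² for some m∈ℤ with X>f>0 and Y>0, then a=(X-f)/2, b=(X+f)/2, c=Y are integers forming a primitive Pythagorean triple with b-a=f. -/
/-- The unit `3 + 2√2` of `ℤ√2`, with inverse `3 - 2√2`. -/
def deltaUnit : (ℤ√2)ˣ :=
  ⟨⟨3, 2⟩, ⟨3, -2⟩, by decide, by decide⟩

/-- The unit `1 + √2`. -/
def omegaUnit : (ℤ√2)ˣ :=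
  ⟨⟨1, 1⟩, ⟨-1, 1⟩, by decide, by decide⟩

lemma norm_deltaUnit_zpow (m : ℤ) :
    Zsqrtd.norm ((deltaUnit ^ m : (ℤ√2)ˣ) : ℤ√2) = 1 := by
  have h : Units.map (Zsqrtd.normMonoidHom (d := 2)) (deltaUnit ^ m) = 1 := by
    rw [map_zpow]
    have h1 : Units.map (Zsqrtd.normMonoidHom (d := 2)) deltaUnit = 1 := by
      ext
      decide
    rw [h1, one_zpow]
  exact congrArg (fun x : ℤˣ => (x : ℤ)) h

theorem stmt_13 (f : ℤ) (hf : Prime f) (hf8 : f % 8 = 1 ∨ f % 8 = 7)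
    (u : ℤ√2) (hu : Prime u) (hudvd : u ∣ (f : ℤ√2))
    (hunorm : Zsqrtd.norm u = f ∨ Zsqrtd.norm u = -f)
    (m : ℤ) (X Y : ℤ) (hXf : f < X) (hfpos : 0 < f) (hY : 0 < Y)
    (hXY : (⟨X, Y⟩ : ℤ√2) = (⟨1, 1⟩ : ℤ√2) * ((deltaUnit ^ m : (ℤ√2)ˣ) : ℤ√2) * u ^ 2 ∨
      (⟨X, Y⟩ : ℤ√2) = -((⟨1, 1⟩ : ℤ√2) * ((deltaUnit ^ m : (ℤ√2)ˣ) : ℤ√2) * u ^ 2)) :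
    ∃ a b c : ℤ, 2 * a = X - f ∧ 2 * b = X + f ∧ c = Y ∧
      0 < a ∧ 0 < b ∧ 0 < c ∧
      a ^ 2 + b ^ 2 = c ^ 2 ∧
      Int.gcd (Int.gcd a b) c = 1 ∧ b - a = f := by
  have hfodd : f % 2 = 1 := by omega
  -- rewrite hXY using the unit η = omegaUnit * deltaUnit ^ m
  set η : (ℤ√2)ˣ := omegaUnit * deltaUnit ^ m with hη
  have hassoc : (⟨X, Y⟩ : ℤ√2) = (η : ℤ√2) * u ^ 2 ∨
      (⟨X, Y⟩ : ℤ√2) = -((η : ℤ√2) * u ^ 2) := by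
    simpa [hη, omegaUnit, Units.val_mul] using hXY
  -- norm of η
  have hnormη : Zsqrtd.norm (η : ℤ√2) = -1 := by
    rw [hη, Units.val_mul, Zsqrtd.norm_mul, norm_deltaUnit_zpow]
    have : Zsqrtd.norm ((omegaUnit : (ℤ√2)ˣ) : ℤ√2) = -1 := by decide
    rw [this]; ring
  have hnormu2 : Zsqrtd.norm (u ^ 2) = f * f := by
    rw [pow_two, Zsqrtd.norm_mul]
    rcases hunorm with h | h <;> rw [h] <;> ring
  have hnormXY : X * X - 2 * (Y * Y) = -(f * f) := by
    have h1 : Zsqrtd.norm (⟨X, Y⟩ : ℤ√2) = X * X - 2 * (Y * Y) := by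
      rw [Zsqrtd.norm_def]; ring
    rcases hassoc with h | h
    · rw [h, Zsqrtd.norm_mul, hnormη, hnormu2] at h1; linarith
    · rw [h, Zsqrtd.norm_neg, Zsqrtd.norm_mul, hnormη, hnormu2] at h1; linarith
  -- X is odd
  have hXodd : X % 2 = 1 := by
    rcases Int.even_or_odd X with he | ho
    · exfalso
      obtain ⟨k, hk⟩ := he
      have heven : Even (f * f) := ⟨Y * Y - 2 * (k * k), by nlinarith [hk, hnormXY]⟩
      have hodd : Odd (f * f) := (Int.odd_iff.mpr hfodd).mul (Int.odd_iff.mpr hfodd)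
      exact (Int.not_odd_iff_even.mpr heven) hodd
    · exact Int.odd_iff.mp ho
  obtain ⟨a, ha⟩ : ∃ a, 2 * a = X - f := ⟨(X - f) / 2, by omega⟩
  refine ⟨a, a + f, Y, ha, by omega, rfl, by omega, by omega, hY, ?_, ?_, by ring⟩
  · nlinarith [ha, hnormXY]
  · -- gcd = 1
    by_contra hg
    set b := a + f with hb
    set g := Int.gcd (Int.gcd a b) Y with hgdef
    obtain ⟨p, hp, hpg⟩ := Nat.exists_prime_and_dvd hg
    have hpa : (p : ℤ) ∣ a :=
      dvd_trans (Int.natCast_dvd_natCast.mpr (dvd_trans hpg (Nat.gcd_dvd_left _ _)))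
        (Int.gcd_dvd_left a b)
    have hpb : (p : ℤ) ∣ b :=
      dvd_trans (Int.natCast_dvd_natCast.mpr (dvd_trans hpg (Nat.gcd_dvd_left _ _)))
        (Int.gcd_dvd_right a b)
    have hpY : (p : ℤ) ∣ Y :=
      dvd_trans (Int.natCast_dvd_natCast.mpr hpg) (Int.gcd_dvd_right (Int.gcd a b : ℤ) Y)
    have hpf : (p : ℤ) ∣ f := by
      have h1 : (p : ℤ) ∣ b - a := dvd_sub hpb hpa
      have h2 : b - a = f := by omega
      rwa [h2] at h1
    -- p = f
    have hpef : (p : ℤ) = f := by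
      have hpp : Prime (p : ℤ) := Nat.prime_iff_prime_int.mp hp
      have hass := hpp.associated_of_dvd hf hpf
      rcases Int.associated_iff.mp hass with h | h
      · exact h
      · exfalso
        have : (0 : ℤ) < p := by exact_mod_cast hp.pos
        omega
    rw [hpef] at hpa hpY
    have hfX : f ∣ X := by
      have h1 : f ∣ 2 * a + f := dvd_add (hpa.mul_left 2) dvd_rfl
      have h2 : 2 * a + f = X := by omega
      rwa [h2] at h1
    -- f divides ⟨X, Y⟩ in ℤ√2
    have hdXY : (f : ℤ√2) ∣ (⟨X, Y⟩ : ℤ√2) := by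
      rw [Zsqrtd.intCast_dvd]
      exact ⟨hfX, hpY⟩
    -- hence f divides u ^ 2
    have hdu2 : (f : ℤ√2) ∣ u ^ 2 := by
      rcases hassoc with h | h
      · have hassoc2 : Associated (u ^ 2) (⟨X, Y⟩ : ℤ√2) := ⟨η, by rw [h]; ring⟩
        exact (hassoc2.dvd_iff_dvd_right).mpr hdXY
      · have hassoc2 : Associated (u ^ 2) (⟨X, Y⟩ : ℤ√2) :=
          ⟨-η, by rw [h]; simp [Units.val_neg]; ring⟩
        exact (hassoc2.dvd_iff_dvd_right).mpr hdXY
    obtain ⟨hfre, hfim⟩ := (Zsqrtd.intCast_dvd f (u ^ 2)).mp hdu2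
    have him : (u ^ 2).im = 2 * (u.re * u.im) := by
      rw [pow_two, Zsqrtd.im_mul]; ring
    rw [him] at hfim
    have hf2 : ¬ (f ∣ 2) := by
      intro h
      have h2 := Int.le_of_dvd (by norm_num) h
      have h3 := hf.ne_one
      omega
    have hfrim : f ∣ u.re * u.im := (hf.dvd_or_dvd hfim).resolve_left hf2
    have hnu : u.re * u.re - 2 * (u.im * u.im) = f ∨
        u.re * u.re - 2 * (u.im * u.im) = -f := by
      rcases hunorm with h | h <;> [left; right] <;>
        (rw [← h, Zsqrtd.norm_def]; ring)
    have hkey : f ∣ u.re ∧ f ∣ u.im := by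
      rcases hf.dvd_or_dvd hfrim with h | h
      · constructor
        · exact h
        · have h1 : f ∣ u.re * u.re := h.mul_right _
          have h2 : f ∣ 2 * (u.im * u.im) := by
            rcases hnu with hn | hn
            · have : 2 * (u.im * u.im) = u.re * u.re - f := by linarith
              rw [this]; exact dvd_sub h1 dvd_rfl
            · have : 2 * (u.im * u.im) = u.re * u.re + f := by linarith
              rw [this]; exact dvd_add h1 dvd_rfl
          have h3 : f ∣ u.im * u.im := (hf.dvd_or_dvd h2).resolve_left hf2
          exact (hf.dvd_or_dvd h3).elim id id
      · constructor
        · have h2 : f ∣ 2 * (u.im * u.im) := (h.mul_right u.im).mul_left 2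
          have h3 : f ∣ u.re * u.re := by
            rcases hnu with hn | hn
            · have : u.re * u.re = 2 * (u.im * u.im) + f := by linarith
              rw [this]; exact dvd_add h2 dvd_rfl
            · have : u.re * u.re = 2 * (u.im * u.im) - f := by linarith
              rw [this]; exact dvd_sub h2 dvd_rfl
          exact (hf.dvd_or_dvd h3).elim id id
        · exact h
    obtain ⟨⟨r, hr⟩, ⟨i, hi⟩⟩ := hkey
    rw [hr, hi] at hnu
    have : f * f ∣ f := by
      rcases hnu with hn | hn
      · exact ⟨r * r - 2 * (i * i), by linear_combination -hn⟩
      · exact ⟨-(r * r - 2 * (i * i)), by linear_combination hn⟩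
    have h1 : f ∣ 1 := by
      obtain ⟨k, hk⟩ := this
      refine ⟨k, ?_⟩
      have : f * 1 = f * (f * k) := by rw [← mul_assoc, ← hk]; ring
      exact mul_left_cancel₀ (by omega) this
    have h4 := Int.le_of_dvd (by norm_num) h1
    have h5 := hf.ne_one
    omega
end

section
/- If (a,a+f,c) is a primitive Pythagorean triple with f prime, f≡±1 (mod 8), then there exist m∈ℤ, a choice of sign, and a generator 𝔲 of one of the prime ideals above f in ℤ[√2], such that 2a+f+c√2 = ±(1+√2)(3+2√2)^m·𝔲². -/
open Zsqrtd

section EuclideanInstance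

lemma two_nonsquare : ∀ n : ℤ, (2:ℤ) ≠ n * n := by
  intro n h
  rcases le_or_gt n 0 with h1 | h1
  · rcases le_or_gt n (-2) with h2 | h2
    · nlinarith
    · interval_cases n <;> omega
  · rcases le_or_gt 2 n with h2 | h2
    · nlinarith
    · interval_cases n <;> omega

lemma znorm_eq_zero {z : ℤ√2} : z.norm = 0 ↔ z = 0 := Zsqrtd.norm_eq_zero two_nonsquare z

lemma near (p n : ℤ) (hn : 0 < n) : ∃ q : ℤ, -n ≤ 2*(p - q*n) ∧ 2*(p - q*n) ≤ n := by
  refine ⟨if 2*(p % n) ≤ n then p / n else p / n + 1, ?_⟩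
  have h0 := Int.emod_nonneg p (ne_of_gt hn)
  have h1 := Int.emod_lt_of_pos p hn
  have h2 := Int.mul_ediv_add_emod p n
  split <;> constructor <;> nlinarith [Int.mul_ediv_add_emod p n]

lemma near' (p n : ℤ) (hn : n ≠ 0) : ∃ q : ℤ, -|n| ≤ 2*(p - q*n) ∧ 2*(p - q*n) ≤ |n| := by
  rcases hn.lt_or_gt with h | h
  · obtain ⟨q, hq1, hq2⟩ := near p (-n) (by omega)
    exact ⟨-q, by rw [abs_of_neg h]; constructor <;> nlinarith⟩
  · obtain ⟨q, hq1, hq2⟩ := near p n h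
    exact ⟨q, by rw [abs_of_pos h]; exact ⟨hq1, hq2⟩⟩

lemma div_aux (x y : ℤ√2) (hy : y ≠ 0) :
    ∃ q : ℤ√2, ((x - q*y).norm).natAbs < (y.norm).natAbs := by
  have hn : y.norm ≠ 0 := fun h => hy (znorm_eq_zero.mp h)
  set n := y.norm with hns
  obtain ⟨q1, hq1a, hq1b⟩ := near' ((x * star y).re) n hn
  obtain ⟨q2, hq2a, hq2b⟩ := near' ((x * star y).im) n hn
  refine ⟨⟨q1, q2⟩, ?_⟩
  set e1 : ℤ := (x * star y).re - q1 * n with he1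
  set e2 : ℤ := (x * star y).im - q2 * n with he2
  have key : (x - ⟨q1,q2⟩*y).norm * n = e1*e1 - 2*(e2*e2) := by
    have h3 : (x - ⟨q1,q2⟩*y) * star y = ⟨e1, e2⟩ := by
      have h4 : (⟨q1,q2⟩ : ℤ√2) * (y * star y) = ⟨q1 * n, q2 * n⟩ := by
        rw [← Zsqrtd.norm_eq_mul_conj, ← hns]
        ext <;> simp [Zsqrtd.re_mul, Zsqrtd.im_mul]
      have : (x - ⟨q1,q2⟩*y) * star y = x * star y - ⟨q1,q2⟩ * (y * star y) := by ring
      rw [this, h4]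
      ext <;> simp [Zsqrtd.re_sub, Zsqrtd.im_sub, he1, he2]
    have h5 := congrArg Zsqrtd.norm h3
    rw [Zsqrtd.norm_mul, Zsqrtd.norm_conj] at h5
    rw [h5, Zsqrtd.norm_def]
    ring
  have habs : |n| * |n| = n * n := by rw [← abs_mul, abs_mul_self]
  have h6 : (x - ⟨q1,q2⟩*y).norm * n < n * n ∧ -(n*n) < (x - ⟨q1,q2⟩*y).norm * n := by
    constructor <;> nlinarith [abs_pos.mpr hn, abs_nonneg n, sq_nonneg e1, sq_nonneg e2]
  set R := (x - ⟨q1,q2⟩*y).norm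
  have h7 : |R| < |n| := by
    rcases le_or_gt |n| |R| with h | h
    · exfalso
      have : |R * n| = |R| * |n| := abs_mul _ _
      have h8 : |R * n| < n * n := by
        rw [abs_lt]; constructor
        · linarith [h6.2]
        · linarith [h6.1]
      nlinarith [abs_pos.mpr hn, le_abs_self (R*n), neg_abs_le (R*n)]
    · exact h
  exact Int.natAbs_lt_iff_mul_self_lt.mpr
    (by nlinarith [abs_nonneg R, abs_nonneg n, abs_mul_self R, abs_mul_self n] : R * R < n * n)

noncomputable instance : EuclideanDomain (ℤ√2) :=
{ (inferInstance : CommRing (ℤ√2)), (inferInstance : Nontrivial (ℤ√2)) with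
  quotient := fun x y => if h : y = 0 then 0 else Classical.choose (div_aux x y h)
  quotient_zero := fun a => by simp
  remainder := fun x y => if h : y = 0 then x else x - Classical.choose (div_aux x y h) * y
  quotient_mul_add_remainder_eq := fun a b => by
    by_cases h : b = 0 <;> simp [h] <;> ring
  r := fun x y => x.norm.natAbs < y.norm.natAbs
  r_wellFounded := (measure fun x : ℤ√2 => x.norm.natAbs).wf
  remainder_lt := fun a b hb => by
    simp only [dif_neg hb]
    exact Classical.choose_spec (div_aux a b hb)
  mul_left_not_lt := fun a b hb => by
    simp only [not_lt, Zsqrtd.norm_mul, Int.natAbs_mul]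
    have : b.norm.natAbs ≠ 0 := fun h => hb (znorm_eq_zero.mp (Int.natAbs_eq_zero.mp h))
    exact Nat.le_mul_of_pos_right _ (Nat.pos_of_ne_zero this) }

end EuclideanInstance

section Units

/-- The unit `1 + √2` of `ℤ√2`. -/
def epsUnit : (ℤ√2)ˣ :=
  ⟨⟨1, 1⟩, ⟨-1, 1⟩, by decide, by decide⟩

lemma descent_bounds (x y : ℤ) (hy : y ≠ 0)
    (hn : x*x - 2*(y*y) = 1 ∨ x*x - 2*(y*y) = -1) :
    (x-y).natAbs < y.natAbs ∨ (x+y).natAbs < y.natAbs := by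
  have hy1 : 1 ≤ y*y := by rcases hy.lt_or_gt with h | h <;> nlinarith
  have h1 : y*y ≤ x*x := by rcases hn with h | h <;> nlinarith
  have h2 : x*x < (2*y)*(2*y) := by rcases hn with h | h <;> nlinarith
  have hA : y.natAbs ≤ x.natAbs := Int.natAbs_le_iff_mul_self_le.mpr h1
  have hB : x.natAbs < (2*y).natAbs := Int.natAbs_lt_iff_mul_self_lt.mpr h2
  have hB' : x.natAbs < 2 * y.natAbs := by rw [Int.natAbs_mul] at hB; simpa using hB
  omega

lemma unit_norm (v : (ℤ√2)ˣ) : (v:ℤ√2).norm = 1 ∨ (v:ℤ√2).norm = -1 := by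
  have h := Zsqrtd.norm_eq_one_iff.mpr v.isUnit
  have h2 := Int.natAbs_eq ((v:ℤ√2).norm)
  rw [h] at h2
  push_cast at h2
  exact h2

lemma units_eq_pow (k : ℕ) : ∀ (v : (ℤ√2)ˣ), (v:ℤ√2).im.natAbs = k →
    ∃ n : ℤ, v = epsUnit ^ n ∨ v = -epsUnit ^ n := by
  induction k using Nat.strong_induction_on with
  | _ k ih =>
    intro v hk
    have hn0 := unit_norm v
    have hn : (v:ℤ√2).re*(v:ℤ√2).re - 2*((v:ℤ√2).im*(v:ℤ√2).im) = 1 ∨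
        (v:ℤ√2).re*(v:ℤ√2).re - 2*((v:ℤ√2).im*(v:ℤ√2).im) = -1 := by
      rw [Zsqrtd.norm_def] at hn0
      rcases hn0 with h | h
      · left; linear_combination h
      · right; linear_combination h
    by_cases hy : (v:ℤ√2).im = 0
    · have hx1 : (v:ℤ√2).re * (v:ℤ√2).re = 1 := by
        rcases hn with h | h
        · rw [hy] at h; linear_combination h
        · exfalso; rw [hy] at h; nlinarith
      rcases mul_self_eq_one_iff.mp hx1 with h | h
      · refine ⟨0, Or.inl (Units.ext ?_)⟩
        show (v:ℤ√2) = ((epsUnit^(0:ℤ) : (ℤ√2)ˣ) : ℤ√2)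
        rw [zpow_zero, Units.val_one]
        ext <;> simp [h, hy]
      · refine ⟨0, Or.inr (Units.ext ?_)⟩
        show (v:ℤ√2) = ((-(epsUnit^(0:ℤ)) : (ℤ√2)ˣ) : ℤ√2)
        rw [zpow_zero, Units.val_neg, Units.val_one]
        ext <;> simp [h, hy]
    · rcases descent_bounds (v:ℤ√2).re (v:ℤ√2).im hy hn with hlt | hlt
      · set w := v * epsUnit⁻¹ with hw
        have hwim : (w:ℤ√2).im = (v:ℤ√2).re - (v:ℤ√2).im := by
          rw [hw, Units.val_mul]
          show ((v:ℤ√2) * (⟨-1,1⟩ : ℤ√2)).im = _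
          simp [Zsqrtd.im_mul]; ring
        obtain ⟨n, hn2⟩ := ih (((v:ℤ√2)).re-((v:ℤ√2)).im).natAbs (by omega) w (by rw [hwim])
        have hv : v = w * epsUnit := by rw [hw, inv_mul_cancel_right]
        rcases hn2 with h | h
        · exact ⟨n+1, Or.inl (by rw [hv, h]; group)⟩
        · exact ⟨n+1, Or.inr (by rw [hv, h, neg_mul]; exact neg_inj.mpr (by group))⟩
      · set w := v * epsUnit with hw
        have hwim : (w:ℤ√2).im = (v:ℤ√2).re + (v:ℤ√2).im := by
          rw [hw, Units.val_mul]
          show ((v:ℤ√2) * (⟨1,1⟩ : ℤ√2)).im = _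
          first | (simp [Zsqrtd.im_mul]; ring) | simp [Zsqrtd.im_mul]
        obtain ⟨n, hn2⟩ := ih (((v:ℤ√2)).re+((v:ℤ√2)).im).natAbs (by omega) w (by rw [hwim])
        have hv : v = w * epsUnit⁻¹ := by rw [hw, mul_inv_cancel_right]
        rcases hn2 with h | h
        · exact ⟨n-1, Or.inl (by rw [hv, h]; group)⟩
        · exact ⟨n-1, Or.inr (by rw [hv, h, neg_mul]; exact neg_inj.mpr (by group))⟩

lemma units_eq_pow' (v : (ℤ√2)ˣ) : ∃ n : ℤ, v = epsUnit ^ n ∨ v = -epsUnit ^ n :=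
  units_eq_pow _ v rfl

lemma norm_eps_zpow (n : ℤ) :
    Zsqrtd.norm ((epsUnit^n : (ℤ√2)ˣ) : ℤ√2) = (((-1:ℤˣ)^n : ℤˣ) : ℤ) := by
  have h1 : Units.map (Zsqrtd.normMonoidHom (d := 2)) epsUnit = (-1 : ℤˣ) := by
    ext
    rfl
  have h2 : Zsqrtd.norm ((epsUnit^n : (ℤ√2)ˣ) : ℤ√2)
      = ((Units.map (Zsqrtd.normMonoidHom (d := 2)) (epsUnit^n) : ℤˣ) : ℤ) := rfl
  rw [h2, map_zpow, h1]

end Units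

section StarPrime

lemma zstar_intCast (n : ℤ) : star ((n : ℤ√2)) = (n : ℤ√2) := by
  ext <;> simp

lemma prime_star {p : ℤ√2} (hp : Prime p) : Prime (star p) := by
  have e : ℤ√2 ≃* ℤ√2 := (starRingAut : RingAut (ℤ√2)).toMulEquiv
  have := (MulEquiv.prime_iff (starRingAut : RingAut (ℤ√2)).toMulEquiv).mpr hp; exact this

lemma irred_of_norm_prime {s : ℤ√2} (h : Nat.Prime (s.norm.natAbs)) : Irreducible s := by
  constructor
  · intro hu
    exact h.ne_one (Zsqrtd.norm_eq_one_iff.mpr hu)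
  · intro b c hbc
    have hmul : b.norm.natAbs * c.norm.natAbs = s.norm.natAbs := by
      rw [← Int.natAbs_mul, ← Zsqrtd.norm_mul, ← hbc]
    rcases h.eq_one_or_self_of_dvd b.norm.natAbs ⟨c.norm.natAbs, hmul.symm⟩ with h1 | h1
    · exact Or.inl (Zsqrtd.norm_eq_one_iff.mp h1)
    · right
      apply Zsqrtd.norm_eq_one_iff.mp
      have hpos : 0 < s.norm.natAbs := h.pos
      refine Nat.eq_of_mul_eq_mul_left hpos ?_
      calc s.norm.natAbs * c.norm.natAbs = b.norm.natAbs * c.norm.natAbs := by rw [h1]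
        _ = s.norm.natAbs := hmul
        _ = s.norm.natAbs * 1 := (mul_one _).symm

end StarPrime

lemma eps_sq : epsUnit ^ (2:ℤ) = deltaUnit := by
  apply Units.ext
  show ((epsUnit^(2:ℤ) : (ℤ√2)ˣ) : ℤ√2) = (⟨3,2⟩ : ℤ√2)
  rw [zpow_two, Units.val_mul]
  decide

lemma zsqrtd_irred_prime {x : ℤ√2} (h : Irreducible x) : Prime x :=
  (UniqueFactorizationMonoid.irreducible_iff_prime).mp h

theorem stmt_14 (a f c : ℤ) (ha : 0 < a) (hf : 0 < f) (hc : 0 < c)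
    (hfp : Prime f) (hf8 : f % 8 = 1 ∨ f % 8 = 7)
    (hpyth : a ^ 2 + (a + f) ^ 2 = c ^ 2)
    (hprim : Int.gcd (Int.gcd a (a + f)) c = 1) :
    ∃ (m : ℤ) (u : ℤ√2), Prime u ∧ u ∣ (f : ℤ√2) ∧
      ((⟨2 * a + f, c⟩ : ℤ√2)
          = (⟨1, 1⟩ : ℤ√2) * ((deltaUnit ^ m : (ℤ√2)ˣ) : ℤ√2) * u ^ 2 ∨
        (⟨2 * a + f, c⟩ : ℤ√2)
          = -((⟨1, 1⟩ : ℤ√2) * ((deltaUnit ^ m : (ℤ√2)ˣ) : ℤ√2) * u ^ 2)) := by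
  set p := f.natAbs with hpdef
  have hfp' : Nat.Prime p := Int.prime_iff_natAbs_prime.mp hfp
  have hfeq : (p:ℤ) = f := Int.natAbs_of_nonneg hf.le
  set z : ℤ√2 := ⟨2*a+f, c⟩ with hzdef
  have hNz : z.norm = -(f*f) := by
    rw [Zsqrtd.norm_def]
    show (2*a+f)*(2*a+f) - 2*c*c = -(f*f)
    linear_combination 2*hpyth
  -- f does not divide z
  have hfz : ¬ (f:ℤ√2) ∣ z := by
    intro h
    rw [Zsqrtd.intCast_dvd] at h
    obtain ⟨h1, h2⟩ := h
    have h1' : f ∣ 2*a + f := h1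
    have h2' : f ∣ c := h2
    have ha2 : f ∣ 2*a := by
      have := dvd_sub h1' (dvd_refl f); simpa using this
    have hfa : f ∣ a := by
      rcases hfp.2.2 2 a ha2 with h | h
      · exfalso
        have hle := Int.le_of_dvd (by norm_num) h
        have hf1 : f = 1 := by rcases hf8 with h8 | h8 <;> omega
        exact hfp.ne_one hf1
      · exact h
    have hg1 : f ∣ ((Int.gcd a (a+f) : ℕ) : ℤ) := Int.dvd_coe_gcd hfa (dvd_add hfa (dvd_refl f))
    have hg2 : f ∣ ((Int.gcd (Int.gcd a (a+f)) c : ℕ) : ℤ) := Int.dvd_coe_gcd hg1 h2'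
    rw [hprim] at hg2
    have := Int.le_of_dvd (by norm_num) hg2
    have hf1 : f = 1 := by omega
    exact hfp.ne_one hf1
  -- f is not prime in ℤ√2
  have hfnp : ¬ Prime ((f:ℤ√2)) := by
    haveI : Fact (Nat.Prime p) := ⟨hfp'⟩
    have hp2 : p ≠ 2 := by rcases hf8 with h8 | h8 <;> omega
    have hsq : IsSquare (2 : ZMod p) :=
      (ZMod.exists_sq_eq_two_iff hp2).mpr
        (by rcases hf8 with h8 | h8; exacts [Or.inl (by omega), Or.inr (by omega)])
    obtain ⟨y, hy⟩ := hsq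
    obtain ⟨t, ht⟩ : ∃ t : ℤ, f ∣ t*t - 2 := by
      refine ⟨(y.val:ℤ), ?_⟩
      rw [← hfeq, ← ZMod.intCast_zmod_eq_zero_iff_dvd]
      push_cast
      rw [ZMod.natCast_val, ZMod.cast_id]
      rw [← hy]
      ring
    intro hpr
    have hdvd : ((f:ℤ√2)) ∣ (⟨t,1⟩ : ℤ√2) * ⟨t,-1⟩ := by
      have heq : (⟨t,1⟩ : ℤ√2) * ⟨t,-1⟩ = ((t*t-2 : ℤ) : ℤ√2) := by
        ext <;> simp [Zsqrtd.re_mul, Zsqrtd.im_mul] <;> ring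
      rw [heq]
      exact (Zsqrtd.intCast_dvd_intCast _ _).mpr ht
    rcases hpr.2.2 _ _ hdvd with h | h <;> rw [Zsqrtd.intCast_dvd] at h
    · have h2 : f ∣ (1:ℤ) := by simpa using h.2
      have := Int.le_of_dvd one_pos h2
      exact hfp.ne_one (by omega)
    · have h2 : f ∣ (1:ℤ) := by
        have := h.2
        simp only [Zsqrtd.im] at this
        exact (dvd_neg).mp (by simpa using this)
      have := Int.le_of_dvd one_pos h2
      exact hfp.ne_one (by omega)
  have hfne : ((f:ℤ√2)) ≠ 0 := by
    intro h
    have := congrArg Zsqrtd.norm h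
    rw [Zsqrtd.norm_intCast, Zsqrtd.norm_zero] at this
    have := mul_self_eq_zero.mp this
    omega
  have hfnu : ¬ IsUnit ((f:ℤ√2)) := by
    rw [← Zsqrtd.norm_eq_one_iff, Zsqrtd.norm_intCast, Int.natAbs_mul]
    intro h
    have := Nat.eq_one_of_mul_eq_one_right h
    have hp1 : p = 1 := this
    exact hfp'.ne_one hp1
  obtain ⟨u0, hu0irr, hu0dvd⟩ := WfDvdMonoid.exists_irreducible_factor hfnu hfne
  obtain ⟨w0, hw0⟩ := hu0dvd
  have hu0p : Prime u0 := zsqrtd_irred_prime hu0irr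
  have hnorm_fw : u0.norm * w0.norm = f * f := by
    rw [← Zsqrtd.norm_mul, ← hw0, Zsqrtd.norm_intCast]
  have hw0nu : ¬ IsUnit w0 := by
    intro h
    obtain ⟨W, hW⟩ := h
    exact hfnp ((Associated.prime ⟨W, by rw [hW, ← hw0]⟩) hu0p)
  have hNu : u0.norm.natAbs = p := by
    have hmul : u0.norm.natAbs * w0.norm.natAbs = p * p := by
      rw [← Int.natAbs_mul, hnorm_fw, Int.natAbs_mul]
    have h1 : u0.norm.natAbs ≠ 1 := fun h => hu0irr.not_isUnit (Zsqrtd.norm_eq_one_iff.mp h)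
    have h2 : w0.norm.natAbs ≠ 1 := fun h => hw0nu (Zsqrtd.norm_eq_one_iff.mp h)
    have hd : u0.norm.natAbs ∣ p ^ 2 := ⟨w0.norm.natAbs, by rw [pow_two]; exact hmul.symm⟩
    rcases (Nat.dvd_prime_pow hfp').mp hd with ⟨i, hi, he⟩
    interval_cases i
    · simp at he; exact absurd he h1
    · simpa using he
    · exfalso
      rw [he, pow_two] at hmul
      have hppos : 0 < p * p := Nat.mul_pos hfp'.pos hfp'.pos
      exact h2 (Nat.eq_of_mul_eq_mul_left hppos (by rw [mul_one]; exact hmul))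
  have hNw : w0.norm.natAbs = p := by
    have hmul : u0.norm.natAbs * w0.norm.natAbs = p * p := by
      rw [← Int.natAbs_mul, hnorm_fw, Int.natAbs_mul]
    rw [hNu] at hmul
    exact Nat.eq_of_mul_eq_mul_left hfp'.pos hmul
  -- u0 divides z * star z
  have hzz : z * star z = ((-(f*f) : ℤ) : ℤ√2) := by
    rw [← hNz, ← Zsqrtd.norm_eq_mul_conj]
  have hu0zz : u0 ∣ z * star z := by
    rw [hzz]
    refine dvd_trans ⟨w0, hw0⟩ ?_
    exact (Zsqrtd.intCast_dvd_intCast _ _).mpr ⟨-f, by ring⟩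
  -- choose u dividing z
  have hmain : ∃ u w : ℤ√2, Prime u ∧ (f:ℤ√2) = u * w ∧ u ∣ z ∧
      u.norm.natAbs = p ∧ w.norm.natAbs = p := by
    rcases hu0p.2.2 z (star z) hu0zz with hcase | hcase
    · exact ⟨u0, w0, hu0p, hw0, hcase, hNu, hNw⟩
    · refine ⟨star u0, star w0, prime_star hu0p, ?_, ?_, ?_, ?_⟩
      · rw [← zstar_intCast f, hw0, star_mul']
      · obtain ⟨k, hk⟩ := hcase
        exact ⟨star k, by rw [← star_star z, hk, star_mul']⟩
      · rw [Zsqrtd.norm_conj]; exact hNu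
      · rw [Zsqrtd.norm_conj]; exact hNw
  obtain ⟨u, w, hup, hufw, huz, hNuabs, hNwabs⟩ := hmain
  obtain ⟨s, hs⟩ := huz
  have hune : u ≠ 0 := hup.ne_zero
  have huu : u.norm * u.norm = f * f := by
    have := Int.natAbs_mul_self' u.norm
    rw [hNuabs] at this
    rw [← this, hfeq]
  have hNs : s.norm.natAbs = p := by
    have h : u.norm * s.norm = -(f*f) := by rw [← Zsqrtd.norm_mul, ← hs, hNz]
    have h2 : u.norm.natAbs * s.norm.natAbs = p * p := by
      rw [← Int.natAbs_mul, h]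
      have : (-(f*f)).natAbs = f.natAbs * f.natAbs := by
        rw [Int.natAbs_neg, Int.natAbs_mul]
      rw [this]
    rw [hNuabs] at h2
    exact Nat.eq_of_mul_eq_mul_left hfp'.pos h2
  have hsprime : Prime s := zsqrtd_irred_prime
    (irred_of_norm_prime (by rw [hNs]; exact hfp'))
  -- s * star z = -(u * (w * w))
  have hkey : s * star z = -(u * (w * w)) := by
    apply mul_left_cancel₀ hune
    calc u * (s * star z) = z * star z := by rw [hs]; ring
      _ = ((-(f*f) : ℤ) : ℤ√2) := hzz
      _ = -((f:ℤ√2) * (f:ℤ√2)) := by push_cast; ring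
      _ = -((u*w) * (u*w)) := by rw [← hufw]
      _ = u * -(u * (w*w)) := by ring
  have hsdvd : s ∣ u * (w*w) := dvd_neg.mp ⟨star z, hkey.symm⟩
  have hV : ∃ V : (ℤ√2)ˣ, z = (V : ℤ√2) * u^2 := by
    rcases hsprime.2.2 _ _ hsdvd with hsu | hsw2
    · obtain ⟨t, ht⟩ := hsu
      have htu : IsUnit t := by
        rcases hup.irreducible.isUnit_or_isUnit ht with h | h
        · exact absurd h hsprime.not_unit
        · exact h
      obtain ⟨T, hT⟩ := htu
      have hsT : s * (T : ℤ√2) = u := by rw [ht, hT]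
      have hzT : z * (T : ℤ√2) = u^2 := by
        calc z * (T : ℤ√2) = u * (s * (T : ℤ√2)) := by rw [hs]; ring
          _ = u * u := by rw [hsT]
          _ = u^2 := (pow_two u).symm
      refine ⟨T⁻¹, ?_⟩
      rw [(Units.eq_mul_inv_iff_mul_eq T).mpr hzT]
      ring
    · have hsw : s ∣ w := by
        rcases hsprime.2.2 _ _ hsw2 with h | h <;> exact h
      obtain ⟨t, ht⟩ := hsw
      have hwirr : Irreducible w := irred_of_norm_prime (by rw [hNwabs]; exact hfp')
      have htu : IsUnit t := by
        rcases hwirr.isUnit_or_isUnit ht with h | h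
        · exact absurd h hsprime.not_unit
        · exact h
      obtain ⟨T, hT⟩ := htu
      have hfT : (f:ℤ√2) = z * (T : ℤ√2) := by
        rw [hufw, ht, ← hT, hs]; ring
      have : z = (f:ℤ√2) * (T⁻¹ : (ℤ√2)ˣ) := (Units.eq_mul_inv_iff_mul_eq T).mpr hfT.symm
      exact absurd ⟨((T⁻¹ : (ℤ√2)ˣ) : ℤ√2), this⟩ hfz
  obtain ⟨V, hzV⟩ := hV
  have hNV : Zsqrtd.norm (V : ℤ√2) = -1 := by
    have h := congrArg Zsqrtd.norm hzV
    rw [hNz, Zsqrtd.norm_mul, pow_two, Zsqrtd.norm_mul, huu] at h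
    have hffne : (f*f : ℤ) ≠ 0 := ne_of_gt (mul_pos hf hf)
    apply mul_right_cancel₀ hffne
    rw [neg_one_mul]
    linarith [h]
  obtain ⟨n, hVn⟩ := units_eq_pow' V
  have hpow : (((-1:ℤˣ)^n : ℤˣ) : ℤ) = -1 := by
    rcases hVn with h | h
    · rw [h, norm_eps_zpow] at hNV; exact hNV
    · rw [h, Units.val_neg, Zsqrtd.norm_neg, norm_eps_zpow] at hNV; exact hNV
  have hodd : Odd n := by
    rcases Int.even_or_odd n with ⟨k, hk⟩ | h
    · exfalso
      rw [hk, zpow_add, Int.units_mul_self, Units.val_one] at hpow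
      omega
    · exact h
  obtain ⟨m, hm⟩ := hodd
  have hEps : epsUnit ^ n = deltaUnit ^ m * epsUnit := by
    rw [hm, zpow_add, zpow_mul, eps_sq, zpow_one]
  refine ⟨m, u, hup, ⟨w, hufw⟩, ?_⟩
  have hepsval : ((epsUnit : (ℤ√2)ˣ) : ℤ√2) = (⟨1,1⟩ : ℤ√2) := rfl
  rcases hVn with h | h
  · left
    rw [hzV, h, hEps, Units.val_mul, hepsval]
    ring
  · right
    rw [hzV, h, Units.val_neg, hEps, Units.val_mul, hepsval]
    ring
end
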